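/- Let sl₂(ℂ[X]) be the Lie algebra of 2×2 trace-zero matrices over the polynomial ring ℂ[X] with bracket [A,B] = AB − BA, and set y = E₁₂, z = E₂₁, h = E₁₁ − E₂₂. Then the Lie subalgebra of sl₂(ℂ[X]) generated by the three elements z, h, and y + X·z equals the whole Lie algebra sl₂(ℂ[X]). -/

import Mathlib

open Polynomial Matrix

attribute [local instance] LieRing.ofAssociativeRing

/-- Trace-zero matrices as a Lie subalgebra over `ℂ`. -/
noncomputable def slK : LieSubalgebra ℂ (Matrix (Fin 2) (Fin 2) ℂ[X]) where
  carrier := {B | Matrix.trace B = 0}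
  add_mem' := by intro a b ha hb; simp_all [Set.mem_setOf_eq, Matrix.trace_add]
  zero_mem' := by simp [Set.mem_setOf_eq]
  smul_mem' := by intro c a ha; simp_all [Set.mem_setOf_eq]
  lie_mem' := by
    intro a b _ _
    simp [Set.mem_setOf_eq, Ring.lie_def, Matrix.trace_sub, Matrix.trace_mul_comm a b]

theorem mem_slK (B : Matrix (Fin 2) (Fin 2) ℂ[X]) : B ∈ slK ↔ Matrix.trace B = 0 :=
  Iff.rfl

theorem stmt15
    (y z h : Matrix (Fin 2) (Fin 2) ℂ[X])
    (hy : y = Matrix.single 0 1 1)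
    (hz : z = Matrix.single 1 0 1)
    (hh : h = Matrix.single 0 0 1 - Matrix.single 1 1 1) :
    (LieSubalgebra.lieSpan ℂ (Matrix (Fin 2) (Fin 2) ℂ[X])
        {z, h, y + (X : ℂ[X]) • z}).toSubmodule
      = LinearMap.ker (Matrix.traceLinearMap (Fin 2) ℂ ℂ[X]) := by
  have lsm : ∀ (p : ℂ[X]) (A B : Matrix (Fin 2) (Fin 2) ℂ[X]),
      ⁅A, p • B⁆ = p • ⁅A, B⁆ := by
    intro p A B
    simp [Ring.lie_def, Matrix.mul_smul, Matrix.smul_mul, smul_sub]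
  have sml : ∀ (p : ℂ[X]) (A B : Matrix (Fin 2) (Fin 2) ℂ[X]),
      ⁅p • A, B⁆ = p • ⁅A, B⁆ := by
    intro p A B
    simp [Ring.lie_def, Matrix.mul_smul, Matrix.smul_mul, smul_sub]
  -- basic bracket identities
  have lyz : ⁅y, z⁆ = h := by
    subst hy hz hh; ext i j
    fin_cases i <;> fin_cases j <;>
      simp [Ring.lie_def, Matrix.mul_apply, Matrix.single, Fin.sum_univ_two] <;> ring
  have lhy : ⁅h, y⁆ = (2 : ℂ) • y := by
    rw [two_smul]
    subst hy hz hh; ext i j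
    fin_cases i <;> fin_cases j <;>
      simp [Ring.lie_def, Matrix.mul_apply, Matrix.single, Fin.sum_univ_two] <;> ring
  have lhz : ⁅h, z⁆ = -((2 : ℂ) • z) := by
    rw [two_smul]
    subst hy hz hh; ext i j
    fin_cases i <;> fin_cases j <;>
      simp [Ring.lie_def, Matrix.mul_apply, Matrix.single, Fin.sum_univ_two] <;> ring
  set S := LieSubalgebra.lieSpan ℂ (Matrix (Fin 2) (Fin 2) ℂ[X]) {z, h, y + (X : ℂ[X]) • z}
    with hS
  have hzS : z ∈ S := LieSubalgebra.subset_lieSpan (by simp)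
  have hhS : h ∈ S := LieSubalgebra.subset_lieSpan (by simp)
  have hwS : y + (X : ℂ[X]) • z ∈ S := LieSubalgebra.subset_lieSpan (by simp)
  have hbr : ⁅h, y + (X : ℂ[X]) • z⁆ = (2:ℂ) • y - (2:ℂ) • ((X:ℂ[X]) • z) := by
    rw [lie_add, lhy, lsm X h z, lhz, smul_neg, smul_comm]
    abel
  have hyS : y ∈ S := by
    have hmem : ((4:ℂ)⁻¹) • ((2:ℂ) • (y + (X : ℂ[X]) • z) + ⁅h, y + (X : ℂ[X]) • z⁆) ∈ S :=
      S.smul_mem _ (S.add_mem (S.smul_mem _ hwS) (S.lie_mem hhS hwS))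
    have e1 : (2:ℂ) • (y + (X:ℂ[X]) • z) + ((2:ℂ) • y - (2:ℂ) • ((X:ℂ[X]) • z))
        = (4:ℂ) • y := by
      rw [smul_add]
      have h4 : (4:ℂ) • y = (2:ℂ) • y + (2:ℂ) • y := by rw [← add_smul]; norm_num
      rw [h4]; abel
    have heq : ((4:ℂ)⁻¹) • ((2:ℂ) • (y + (X : ℂ[X]) • z) + ⁅h, y + (X : ℂ[X]) • z⁆) = y := by
      rw [hbr, e1, smul_smul]
      norm_num
    rwa [heq] at hmem
  have hXzS : (X : ℂ[X]) • z ∈ S := by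
    have : (y + (X : ℂ[X]) • z) - y ∈ S := S.sub_mem hwS hyS
    simpa using this
  have key : ∀ n : ℕ, ((X:ℂ[X])^n) • y ∈ S ∧ ((X:ℂ[X])^n) • z ∈ S ∧ ((X:ℂ[X])^n) • h ∈ S := by
    intro n
    induction n with
    | zero => simpa using ⟨hyS, hzS, hhS⟩
    | succ n ih =>
      obtain ⟨ha, hb, hc⟩ := ih
      have hh' : ((X:ℂ[X])^(n+1)) • h ∈ S := by
        have hm : ⁅((X:ℂ[X])^n) • y, (X:ℂ[X]) • z⁆ ∈ S := S.lie_mem ha hXzS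
        rwa [sml, lsm, lyz, smul_smul, ← pow_succ] at hm
      refine ⟨?_, ?_, hh'⟩
      · have hm : ((2:ℂ)⁻¹) • ⁅((X:ℂ[X])^(n+1)) • h, y⁆ ∈ S :=
          S.smul_mem _ (S.lie_mem hh' hyS)
        rwa [sml, lhy, smul_comm ((X:ℂ[X])^(n+1)) ((2:ℂ)), smul_smul, inv_mul_cancel₀
          (by norm_num), one_smul] at hm
      · have hm : (-(2:ℂ)⁻¹) • ⁅((X:ℂ[X])^(n+1)) • h, z⁆ ∈ S :=
          S.smul_mem _ (S.lie_mem hh' hzS)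
        rwa [sml, lhz, smul_neg, smul_neg, smul_comm ((X:ℂ[X])^(n+1)) ((2:ℂ)), neg_smul,
          neg_neg, smul_smul, inv_mul_cancel₀ (by norm_num), one_smul] at hm
  have poly : ∀ (A : Matrix (Fin 2) (Fin 2) ℂ[X]), (∀ n : ℕ, ((X:ℂ[X])^n) • A ∈ S) →
      ∀ p : ℂ[X], p • A ∈ S := by
    intro A hA p
    induction p using Polynomial.induction_on' with
    | add p q hp hq => rw [add_smul]; exact S.add_mem hp hq
    | monomial n a =>
      have e : (Polynomial.monomial n a) • A = a • (((X:ℂ[X])^n) • A) := by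
        rw [← Polynomial.C_mul_X_pow_eq_monomial, mul_smul, ← Polynomial.algebraMap_eq,
          algebraMap_smul]
      rw [e]
      exact S.smul_mem _ (hA n)
  apply le_antisymm
  · intro A hA
    have hA' : A ∈ S := hA
    rw [hS] at hA'
    rw [LinearMap.mem_ker]
    have hspan : LieSubalgebra.lieSpan ℂ (Matrix (Fin 2) (Fin 2) ℂ[X])
        {z, h, y + (X : ℂ[X]) • z} ≤ slK := by
      rw [LieSubalgebra.lieSpan_le]
      rintro B (rfl | rfl | rfl)
      · simp [mem_slK, hz, Matrix.trace_fin_two, Matrix.single]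
      · simp [mem_slK, hh, Matrix.trace_fin_two, Matrix.single]
      · simp [mem_slK, hy, hz, Matrix.trace_fin_two, Matrix.single]
    exact (mem_slK A).mp (hspan hA')
  · intro A hA
    rw [LinearMap.mem_ker] at hA
    have htr : A 0 0 + A 1 1 = 0 := by
      simpa [Matrix.trace_fin_two] using hA
    have hrep : A = A 0 0 • h + A 0 1 • y + A 1 0 • z := by
      subst hy hz hh
      ext i j
      fin_cases i <;> fin_cases j <;>
        simp [Matrix.single, smul_eq_mul, eq_neg_of_add_eq_zero_right htr]
    show A ∈ S
    rw [hrep]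
    exact S.add_mem (S.add_mem (poly h (fun n => (key n).2.2) _)
      (poly y (fun n => (key n).1) _)) (poly z (fun n => (key n).2.1) _)
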